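/- The isometry group of the $E_6$ lattice is $W(E_6)\times\{\pm 1\}$: every $\mathbb{Z}$-linear automorphism $g$ of the sublattice $E_6=k^{\perp}$ preserving the restricted bilinear form is of the form $g=w|_{E_6}$ or $g=-w|_{E_6}$ for some $w\in W(E_6)$, and $-\mathrm{id}_{E_6}$ is not the restriction to $E_6$ of any element of $W(E_6)$. -/

import Mathlib

/-- The symmetric bilinear form on `ℤ^{1,6}`: `⟨x,y⟩ = x₀y₀ - ∑_{i=1}^{6} xᵢyᵢ`. -/
def form (x y : Fin 7 → ℤ) : ℤ := 2 * (x 0 * y 0) - ∑ i, x i * y i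

/-- The standard basis vector `f i`. -/
def fvec (i : Fin 7) : Fin 7 → ℤ := fun j => if j = i then 1 else 0

/-- The canonical vector `k = -3f₀ + f₁ + ⋯ + f₆`. -/
def kvec : Fin 7 → ℤ := fun i => if i = 0 then -3 else 1

/-- A root of the `E₆` lattice: `⟨r,k⟩ = 0` and `⟨r,r⟩ = -2`. -/
def IsRoot (r : Fin 7 → ℤ) : Prop := form r kvec = 0 ∧ form r r = -2

/-- An exceptional vector: `⟨ℓ,ℓ⟩ = -1` and `⟨ℓ,k⟩ = -1`. -/
def IsExc (l : Fin 7 → ℤ) : Prop := form l l = -1 ∧ form l kvec = -1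

/-- The reflection in a root `r`, as a plain function: `x ↦ x + ⟨x,r⟩ r`. -/
def reflFun (r : Fin 7 → ℤ) (x : Fin 7 → ℤ) : Fin 7 → ℤ := x + form x r • r

lemma form_add_left (x y z : Fin 7 → ℤ) : form (x + y) z = form x z + form y z := by
  simp only [form, Pi.add_apply, add_mul, Finset.sum_add_distrib]
  ring

lemma form_smul_left (c : ℤ) (x y : Fin 7 → ℤ) : form (c • x) y = c * form x y := by
  simp only [form, Pi.smul_apply, smul_eq_mul, mul_assoc, ← Finset.mul_sum]
  ring

/-- The reflection in a root `r`, as a linear map. -/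
def reflL (r : Fin 7 → ℤ) : (Fin 7 → ℤ) →ₗ[ℤ] (Fin 7 → ℤ) where
  toFun := reflFun r
  map_add' x y := by
    simp only [reflFun, form_add_left, add_smul]
    abel
  map_smul' c x := by
    simp only [reflFun, form_smul_left, mul_smul, RingHom.id_apply, smul_add]

lemma reflFun_invol (r : Fin 7 → ℤ) (hr : IsRoot r) (x : Fin 7 → ℤ) :
    reflFun r (reflFun r x) = x := by
  have h : form (x + form x r • r) r = -form x r := by
    rw [form_add_left, form_smul_left, hr.2]; ring
  unfold reflFun
  rw [h, neg_smul]
  abel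

/-- The reflection in a root `r`, as a linear automorphism of `ℤ^{1,6}`. -/
def reflEquiv (r : Fin 7 → ℤ) (hr : IsRoot r) : (Fin 7 → ℤ) ≃ₗ[ℤ] (Fin 7 → ℤ) :=
  LinearEquiv.ofLinear (reflL r) (reflL r)
    (LinearMap.ext fun x => reflFun_invol r hr x)
    (LinearMap.ext fun x => reflFun_invol r hr x)

/-- The Weyl group `W(E₆)`: the subgroup of `GL(ℤ^{1,6})` generated by the reflections
in the roots of the `E₆` lattice. -/
def WE6 : Subgroup ((Fin 7 → ℤ) ≃ₗ[ℤ] (Fin 7 → ℤ)) :=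
  Subgroup.closure {g | ∃ r, ∃ hr : IsRoot r, g = reflEquiv r hr}

/-- The `E₆` lattice `k^⊥ = {x : ⟨x,k⟩ = 0}`, as a `ℤ`-submodule of `ℤ⁷`. -/
def E6L : Submodule ℤ (Fin 7 → ℤ) where
  carrier := {x | form x kvec = 0}
  zero_mem' := by simp [form]
  add_mem' := by
    intro a b ha hb
    simp only [Set.mem_setOf_eq] at *
    rw [form_add_left, ha, hb]; ring
  smul_mem' := by
    intro c x hx
    simp only [Set.mem_setOf_eq] at *
    rw [form_smul_left, hx, mul_zero]

/-! ### Auxiliary development -/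

instance : DecidablePred IsRoot := fun _ => inferInstanceAs (Decidable (_ ∧ _))

lemma form_symm (x y : Fin 7 → ℤ) : form x y = form y x := by
  simp only [form]
  rw [Finset.sum_congr rfl (fun i _ => mul_comm (x i) (y i))]
  ring

lemma form_add_right (x y z : Fin 7 → ℤ) : form x (y + z) = form x y + form x z := by
  rw [form_symm, form_add_left, form_symm y x, form_symm z x]

lemma form_smul_right (c : ℤ) (x y : Fin 7 → ℤ) : form x (c • y) = c * form x y := by
  rw [form_symm, form_smul_left, form_symm]

lemma form_refl_left (r x y : Fin 7 → ℤ) :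
    form (reflFun r x) y = form x y + form x r * form r y := by
  simp only [reflFun, form_add_left, form_smul_left]

lemma form_refl_refl (r : Fin 7 → ℤ) (hr : IsRoot r) (x y : Fin 7 → ℤ) :
    form (reflFun r x) (reflFun r y) = form x y := by
  simp only [reflFun, form_add_left, form_add_right, form_smul_left, form_smul_right]
  rw [hr.2, form_symm y r]
  ring

lemma reflEquiv_apply (r : Fin 7 → ℤ) (hr : IsRoot r) (x : Fin 7 → ℤ) :
    reflEquiv r hr x = reflFun r x := rfl

lemma mulW_apply (f g : (Fin 7 → ℤ) ≃ₗ[ℤ] (Fin 7 → ℤ)) (x : Fin 7 → ℤ) :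
    (f * g) x = f (g x) := rfl

/-- Every element of the Weyl group preserves the form. -/
lemma W_form {w : (Fin 7 → ℤ) ≃ₗ[ℤ] (Fin 7 → ℤ)} (hw : w ∈ WE6) :
    ∀ x y, form (w x) (w y) = form x y := by
  induction hw using Subgroup.closure_induction with
  | mem g hg =>
    obtain ⟨r, hr, rfl⟩ := hg
    intro x y
    exact form_refl_refl r hr x y
  | one => intro x y; rfl
  | mul f g _ _ hf hg => intro x y; rw [mulW_apply, mulW_apply, hf, hg]
  | inv f _ hf =>
    intro x y
    have := hf (f⁻¹ x) (f⁻¹ y)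
    rw [show f (f⁻¹ x) = x from f.apply_symm_apply x,
      show f (f⁻¹ y) = y from f.apply_symm_apply y] at this
    exact this.symm

/-- Every element of the Weyl group fixes `k`. -/
lemma W_kvec {w : (Fin 7 → ℤ) ≃ₗ[ℤ] (Fin 7 → ℤ)} (hw : w ∈ WE6) : w kvec = kvec := by
  induction hw using Subgroup.closure_induction with
  | mem g hg =>
    obtain ⟨r, hr, rfl⟩ := hg
    show reflFun r kvec = kvec
    rw [reflFun, form_symm, hr.1, zero_smul, add_zero]
  | one => rfl
  | mul f g _ _ hf hg => rw [mulW_apply, hg, hf]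
  | inv f _ hf =>
    conv_lhs => rw [← hf]
    exact f.symm_apply_apply kvec

lemma W_E6L {w : (Fin 7 → ℤ) ≃ₗ[ℤ] (Fin 7 → ℤ)} (hw : w ∈ WE6) {x : Fin 7 → ℤ}
    (hx : form x kvec = 0) : form (w x) kvec = 0 := by
  rw [← W_kvec hw, W_form hw, hx]

lemma W_root {w : (Fin 7 → ℤ) ≃ₗ[ℤ] (Fin 7 → ℤ)} (hw : w ∈ WE6) {x : Fin 7 → ℤ}
    (hx : IsRoot x) : IsRoot (w x) :=
  ⟨W_E6L hw hx.1, by rw [W_form hw, hx.2]⟩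

/-! ### Explicit data -/

/-- The simple roots of `E₆`. -/
def Delta : Fin 6 → (Fin 7 → ℤ) :=
  ![![0,1,-1,0,0,0,0], ![0,0,1,-1,0,0,0], ![0,0,0,1,-1,0,0],
    ![0,0,0,0,1,-1,0], ![0,0,0,0,0,1,-1], ![1,-1,-1,-1,0,0,0]]

/-- The Cartan pairing matrix of the simple roots. -/
def cartan : Fin 6 → Fin 6 → ℤ :=
  ![![-2,1,0,0,0,0],![1,-2,1,0,0,0],![0,1,-2,1,0,1],
    ![0,0,1,-2,1,0],![0,0,0,1,-2,0],![0,0,1,0,0,-2]]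

/-- Coordinates of a vector of `E6L` with respect to the simple roots. -/
def coeffs (x : Fin 7 → ℤ) : Fin 6 → ℤ :=
  ![x 1 + x 0, x 1 + x 2 + 2*x 0, x 1 + x 2 + x 3 + 3*x 0, -(x 5) - x 6, -(x 6), x 0]

/-- A strictly dominant vector (twice the Weyl vector). -/
def rho : Fin 7 → ℤ := ![11,-3,-4,-5,-6,-7,-8]

def rootL : List (Fin 7 → ℤ) := [![-2,1,1,1,1,1,1], ![-1,0,0,0,1,1,1], ![-1,0,0,1,0,1,1], ![-1,0,0,1,1,0,1], ![-1,0,0,1,1,1,0], ![-1,0,1,0,0,1,1], ![-1,0,1,0,1,0,1], ![-1,0,1,0,1,1,0], ![-1,0,1,1,0,0,1], ![-1,0,1,1,0,1,0], ![-1,0,1,1,1,0,0], ![-1,1,0,0,0,1,1], ![-1,1,0,0,1,0,1], ![-1,1,0,0,1,1,0], ![-1,1,0,1,0,0,1], ![-1,1,0,1,0,1,0], ![-1,1,0,1,1,0,0], ![-1,1,1,0,0,0,1], ![-1,1,1,0,0,1,0], ![-1,1,1,0,1,0,0], ![-1,1,1,1,0,0,0], ![0,-1,0,0,0,0,1], ![0,-1,0,0,0,1,0],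 ![0,-1,0,0,1,0,0], ![0,-1,0,1,0,0,0], ![0,-1,1,0,0,0,0], ![0,0,-1,0,0,0,1], ![0,0,-1,0,0,1,0], ![0,0,-1,0,1,0,0], ![0,0,-1,1,0,0,0], ![0,0,0,-1,0,0,1], ![0,0,0,-1,0,1,0], ![0,0,0,-1,1,0,0], ![0,0,0,0,-1,0,1], ![0,0,0,0,-1,1,0], ![0,0,0,0,0,-1,1], ![0,0,0,0,0,1,-1], ![0,0,0,0,1,-1,0], ![0,0,0,0,1,0,-1], ![0,0,0,1,-1,0,0], ![0,0,0,1,0,-1,0], ![0,0,0,1,0,0,-1], ![0,0,1,-1,0,0,0], ![0,0,1,0,-1,0,0], ![0,0,1,0,0,-1,0], ![0,0,1,0,0,0,-1], ![0,1,-1,0,0,0,0], ![0,1,0,-1,0,0,0], ![0,1,0,0,-1,0,0], ![0,1,0,0,0,-1,0], ![0,1,0,0,0,0,-1], ![1,-1,-1,-1,0,0,0], ![1,-1,-1,0,-1,0,0], ![1,-1,-1,0,0,-1,0], ![1,-1,-1,0,0,0,-1], ![1,-1,0,-1,-1,0,0], ![1,-1,0,-1,0,-1,0], ![1,-1,0,-1,0,0,-1],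 ![1,-1,0,0,-1,-1,0], ![1,-1,0,0,-1,0,-1], ![1,-1,0,0,0,-1,-1], ![1,0,-1,-1,-1,0,0], ![1,0,-1,-1,0,-1,0], ![1,0,-1,-1,0,0,-1], ![1,0,-1,0,-1,-1,0], ![1,0,-1,0,-1,0,-1], ![1,0,-1,0,0,-1,-1], ![1,0,0,-1,-1,-1,0], ![1,0,0,-1,-1,0,-1], ![1,0,0,-1,0,-1,-1], ![1,0,0,0,-1,-1,-1], ![2,-1,-1,-1,-1,-1,-1]]
def posL : List (Fin 7 → ℤ) := [![0,0,0,0,0,1,-1], ![0,0,0,0,1,-1,0], ![0,0,0,0,1,0,-1], ![0,0,0,1,-1,0,0], ![0,0,0,1,0,-1,0], ![0,0,0,1,0,0,-1], ![0,0,1,-1,0,0,0], ![0,0,1,0,-1,0,0], ![0,0,1,0,0,-1,0], ![0,0,1,0,0,0,-1], ![0,1,-1,0,0,0,0], ![0,1,0,-1,0,0,0], ![0,1,0,0,-1,0,0], ![0,1,0,0,0,-1,0], ![0,1,0,0,0,0,-1], ![1,-1,-1,-1,0,0,0], ![1,-1,-1,0,-1,0,0], ![1,-1,-1,0,0,-1,0],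 ![1,-1,-1,0,0,0,-1], ![1,-1,0,-1,-1,0,0], ![1,-1,0,-1,0,-1,0], ![1,-1,0,-1,0,0,-1], ![1,-1,0,0,-1,-1,0], ![1,-1,0,0,-1,0,-1], ![1,-1,0,0,0,-1,-1], ![1,0,-1,-1,-1,0,0], ![1,0,-1,-1,0,-1,0], ![1,0,-1,-1,0,0,-1], ![1,0,-1,0,-1,-1,0], ![1,0,-1,0,-1,0,-1], ![1,0,-1,0,0,-1,-1], ![1,0,0,-1,-1,-1,0], ![1,0,0,-1,-1,0,-1], ![1,0,0,-1,0,-1,-1], ![1,0,0,0,-1,-1,-1], ![2,-1,-1,-1,-1,-1,-1]]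

lemma cartan_eq : ∀ i j, form (Delta i) (Delta j) = cartan i j := by decide
lemma Delta_root : ∀ i, IsRoot (Delta i) := by decide
lemma Delta_mem_rootL : ∀ i, Delta i ∈ rootL := by decide
lemma rootL_root : ∀ r ∈ rootL, IsRoot r := by decide
lemma posL_sub : ∀ r ∈ posL, r ∈ rootL := by decide
lemma posL_coeffs : ∀ r ∈ posL, ∀ i, 0 ≤ coeffs r i := by decide
lemma posL_ne_zero : ∀ r ∈ posL, ∃ i, 1 ≤ coeffs r i := by decide
lemma rootL_signs : ∀ r ∈ rootL, (∀ i, 0 ≤ coeffs r i) → r ∈ posL := by decide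
lemma rootL_signs' : ∀ r ∈ rootL, (∀ i, 0 ≤ coeffs r i) ∨ (∀ i, coeffs r i ≤ 0) := by decide
lemma rho_E6L : form rho kvec = 0 := by decide
lemma rho_norm : form rho rho = -78 := by decide
lemma rho_dom : ∀ i, form rho (Delta i) = -1 := by decide
lemma rho_reg : ∀ r ∈ rootL, form rho r ≠ 0 := by decide
lemma indec : ∀ i : Fin 6, ∀ a ∈ posL, ∀ b ∈ posL, a + b ≠ Delta i := by decide
lemma dec_or : ∀ r ∈ posL, (∃ i : Fin 6, Delta i = r) ∨ ∃ a ∈ posL, ∃ b ∈ posL, a + b = r := by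
  decide

/-! ### Completeness of the root list -/

lemma eta7 (x : Fin 7 → ℤ) : x = ![x 0, x 1, x 2, x 3, x 4, x 5, x 6] := by
  funext i; fin_cases i <;> rfl

lemma form_kvec_eq (x : Fin 7 → ℤ) :
    form x kvec = -3 * x 0 - (x 1 + x 2 + x 3 + x 4 + x 5 + x 6) := by
  simp [form, kvec, Fin.sum_univ_seven]; ring

lemma form_self_eq (x : Fin 7 → ℤ) :
    form x x = x 0 * x 0 - (x 1 * x 1 + x 2 * x 2 + x 3 * x 3 + x 4 * x 4
      + x 5 * x 5 + x 6 * x 6) := by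
  simp [form, Fin.sum_univ_seven]; ring

def I3 : List ℤ := [-1, 0, 1]


set_option maxRecDepth 4000 in
set_option maxHeartbeats 2000000 in
lemma root_box : ∀ a ∈ I3, ∀ b ∈ I3, ∀ c ∈ I3, ∀ d ∈ I3, ∀ e ∈ I3, ∀ f ∈ I3, ∀ g ∈ I3,
    b+c+d+e+f+g = -3*a → a*a-(b*b+c*c+d*d+e*e+f*f+g*g) = -2 →
    (![a,b,c,d,e,f,g] : Fin 7 → ℤ) ∈ rootL := by decide

lemma small_mem_I3 : ∀ t : ℤ, t*t ≤ 3 → t ∈ I3 := by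
  intro t h3
  have hl : -2 ≤ t := by nlinarith [sq_nonneg (t+2)]
  have hu : t ≤ 2 := by nlinarith [sq_nonneg (t-2)]
  interval_cases t <;> first | decide | omega

set_option maxHeartbeats 1000000 in
/-- Every root appears in the explicit list of the 72 roots. -/
lemma root_mem {r : Fin 7 → ℤ} (hr : IsRoot r) : r ∈ rootL := by
  obtain ⟨h1, h2⟩ := hr
  rw [form_kvec_eq] at h1
  rw [form_self_eq] at h2
  set a := r 0; set b := r 1; set c := r 2; set d := r 3; set e := r 4
  set f := r 5; set g := r 6
  have hsum : b+c+d+e+f+g = -3*a := by linarith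
  have hsq : a*a-(b*b+c*c+d*d+e*e+f*f+g*g) = -2 := by linarith
  have h15 : (b-c)^2 + (b-d)^2 + (b-e)^2 + (b-f)^2 + (b-g)^2 + (c-d)^2 + (c-e)^2
      + (c-f)^2 + (c-g)^2 + (d-e)^2 + (d-f)^2 + (d-g)^2 + (e-f)^2 + (e-g)^2 + (f-g)^2
      = 6*(b*b+c*c+d*d+e*e+f*f+g*g) - (b+c+d+e+f+g)^2 := by ring
  have hpos : (0:ℤ) ≤ (b-c)^2 + (b-d)^2 + (b-e)^2 + (b-f)^2 + (b-g)^2 + (c-d)^2 + (c-e)^2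
      + (c-f)^2 + (c-g)^2 + (d-e)^2 + (d-f)^2 + (d-g)^2 + (e-f)^2 + (e-g)^2 + (f-g)^2 := by
    positivity
  have h9 : (b+c+d+e+f+g)^2 = 9*(a*a) := by rw [hsum]; ring
  have hcs : a*a ≤ 4 := by linarith
  have nb := mul_self_nonneg b
  have nc := mul_self_nonneg c
  have nd := mul_self_nonneg d
  have ne' := mul_self_nonneg e
  have nf := mul_self_nonneg f
  have ng := mul_self_nonneg g
  rcases lt_trichotomy (a*a) 4 with hlt | heq | hgt
  · have sa : a*a ≤ 3 := by linarith
    have hal : -2 ≤ a := by nlinarith [sq_nonneg (a+2)]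
    have hau : a ≤ 2 := by nlinarith [sq_nonneg (a-2)]
    have ha1 : a*a ≤ 1 := by interval_cases a <;> omega
    have s1 : b*b ≤ 3 := by linarith
    have s2 : c*c ≤ 3 := by linarith
    have s3 : d*d ≤ 3 := by linarith
    have s4 : e*e ≤ 3 := by linarith
    have s5 : f*f ≤ 3 := by linarith
    have s6 : g*g ≤ 3 := by linarith
    rw [eta7 r]
    exact root_box a (small_mem_I3 a sa) b (small_mem_I3 b s1) c (small_mem_I3 c s2)
      d (small_mem_I3 d s3) e (small_mem_I3 e s4) f (small_mem_I3 f s5)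
      g (small_mem_I3 g s6) hsum hsq
  · have hal : -2 ≤ a := by nlinarith [sq_nonneg (a+2)]
    have hau : a ≤ 2 := by nlinarith [sq_nonneg (a-2)]
    have ha : a = 2 ∨ a = -2 := by interval_cases a <;> omega
    have q1 := sq_nonneg (b+1); have q2 := sq_nonneg (c+1); have q3 := sq_nonneg (d+1)
    have q4 := sq_nonneg (e+1); have q5 := sq_nonneg (f+1); have q6 := sq_nonneg (g+1)
    have p1 := sq_nonneg (b-1); have p2 := sq_nonneg (c-1); have p3 := sq_nonneg (d-1)
    have p4 := sq_nonneg (e-1); have p5 := sq_nonneg (f-1); have p6 := sq_nonneg (g-1)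
    rcases ha with ha | ha
    · have hz : (b+1)^2 + (c+1)^2 + (d+1)^2 + (e+1)^2 + (f+1)^2 + (g+1)^2 = 0 := by
        linear_combination (-1)*hsq + 2*hsum + (a-4)*ha
      have z1 : (b+1)^2 = 0 := by linarith
      have z2 : (c+1)^2 = 0 := by linarith
      have z3 : (d+1)^2 = 0 := by linarith
      have z4 : (e+1)^2 = 0 := by linarith
      have z5 : (f+1)^2 = 0 := by linarith
      have z6 : (g+1)^2 = 0 := by linarith
      have e1 : b = -1 := by have := sq_eq_zero_iff.mp z1; omega
      have e2 : c = -1 := by have := sq_eq_zero_iff.mp z2; omega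
      have e3 : d = -1 := by have := sq_eq_zero_iff.mp z3; omega
      have e4 : e = -1 := by have := sq_eq_zero_iff.mp z4; omega
      have e5 : f = -1 := by have := sq_eq_zero_iff.mp z5; omega
      have e6 : g = -1 := by have := sq_eq_zero_iff.mp z6; omega
      rw [eta7 r]
      show (![a,b,c,d,e,f,g] : Fin 7 → ℤ) ∈ rootL
      rw [ha, e1, e2, e3, e4, e5, e6]
      decide
    · have hz : (b-1)^2 + (c-1)^2 + (d-1)^2 + (e-1)^2 + (f-1)^2 + (g-1)^2 = 0 := by
        linear_combination (-1)*hsq - 2*hsum + (a+4)*ha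
      have z1 : (b-1)^2 = 0 := by linarith
      have z2 : (c-1)^2 = 0 := by linarith
      have z3 : (d-1)^2 = 0 := by linarith
      have z4 : (e-1)^2 = 0 := by linarith
      have z5 : (f-1)^2 = 0 := by linarith
      have z6 : (g-1)^2 = 0 := by linarith
      have e1 : b = 1 := by have := sq_eq_zero_iff.mp z1; omega
      have e2 : c = 1 := by have := sq_eq_zero_iff.mp z2; omega
      have e3 : d = 1 := by have := sq_eq_zero_iff.mp z3; omega
      have e4 : e = 1 := by have := sq_eq_zero_iff.mp z4; omega
      have e5 : f = 1 := by have := sq_eq_zero_iff.mp z5; omega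
      have e6 : g = 1 := by have := sq_eq_zero_iff.mp z6; omega
      rw [eta7 r]
      show (![a,b,c,d,e,f,g] : Fin 7 → ℤ) ∈ rootL
      rw [ha, e1, e2, e3, e4, e5, e6]
      decide
  · omega

/-! ### Positivity and the Cauchy–Schwarz bound -/

lemma form_nonpos {x : Fin 7 → ℤ} (hx : form x kvec = 0) : form x x ≤ 0 := by
  rw [form_kvec_eq] at hx
  rw [form_self_eq]
  set a := x 0; set b := x 1; set c := x 2; set d := x 3; set e := x 4
  set f := x 5; set g := x 6
  have h15 : (b-c)^2 + (b-d)^2 + (b-e)^2 + (b-f)^2 + (b-g)^2 + (c-d)^2 + (c-e)^2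
      + (c-f)^2 + (c-g)^2 + (d-e)^2 + (d-f)^2 + (d-g)^2 + (e-f)^2 + (e-g)^2 + (f-g)^2
      = 6*(b*b+c*c+d*d+e*e+f*f+g*g) - (b+c+d+e+f+g)^2 := by ring
  have hpos : (0:ℤ) ≤ (b-c)^2 + (b-d)^2 + (b-e)^2 + (b-f)^2 + (b-g)^2 + (c-d)^2 + (c-e)^2
      + (c-f)^2 + (c-g)^2 + (d-e)^2 + (d-f)^2 + (d-g)^2 + (e-f)^2 + (e-g)^2 + (f-g)^2 := by
    positivity
  have h9 : (b+c+d+e+f+g)^2 = 9*(a*a) := by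
    have : b+c+d+e+f+g = -3*a := by linarith
    rw [this]; ring
  nlinarith [mul_self_nonneg a]

lemma form_sub_smul (s t : ℤ) (x y : Fin 7 → ℤ) :
    form (s • x + t • y) (s • x + t • y)
      = s * s * form x x + 2 * (s * t) * form x y + t * t * form y y := by
  simp only [form_add_left, form_add_right, form_smul_left, form_smul_right, form_symm y x]
  ring

/-- Cauchy–Schwarz bound: on the `E₆` lattice vectors of norm `-78` pair with `ρ`
in the interval `[-78, 78]`. -/
lemma CS78 {x : Fin 7 → ℤ} (hx : form x kvec = 0) (hn : form x x = -78) :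
    -78 ≤ form x rho ∧ form x rho ≤ 78 := by
  set c := form x rho with hc
  have hz : form ((78:ℤ) • x + c • rho) kvec = 0 := by
    rw [form_add_left, form_smul_left, form_smul_left, hx, rho_E6L]; ring
  have h := form_nonpos hz
  rw [form_sub_smul, hn, rho_norm, ← hc] at h
  constructor <;> nlinarith

/-! ### Expansion in the simple-root basis -/

lemma cons_val_five {α : Type*} {m : ℕ} (x : α) (u : Fin (m+5) → α) :
    Matrix.vecCons x u 5
      = Matrix.vecHead (Matrix.vecTail (Matrix.vecTail (Matrix.vecTail (Matrix.vecTail u)))) :=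
  rfl

lemma cons_val_six {α : Type*} {m : ℕ} (x : α) (u : Fin (m+6) → α) :
    Matrix.vecCons x u 6
      = Matrix.vecHead (Matrix.vecTail (Matrix.vecTail (Matrix.vecTail
          (Matrix.vecTail (Matrix.vecTail u))))) :=
  rfl

lemma expand {x : Fin 7 → ℤ} (hx : form x kvec = 0) :
    ∑ i, coeffs x i • Delta i = x := by
  rw [form_kvec_eq] at hx
  funext j
  rw [Finset.sum_apply]
  fin_cases j <;>
    simp [coeffs, Delta, Fin.sum_univ_six, cons_val_five, cons_val_six,
      Matrix.vecHead, Matrix.vecTail] <;>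
    linarith

/-! ### Dominantization -/

lemma refl_root {s x : Fin 7 → ℤ} (hs : IsRoot s) (hx : IsRoot x) :
    IsRoot (reflFun s x) := by
  constructor
  · rw [form_refl_left, hx.1, hs.1, mul_zero, add_zero]
  · rw [form_refl_refl s hs, hx.2]

lemma form_refl_adj (r x y : Fin 7 → ℤ) :
    form (reflFun r x) y = form x (reflFun r y) := by
  rw [form_refl_left, reflFun, form_add_right, form_smul_right, form_symm r y]
  ring

lemma oneW_apply (x : Fin 7 → ℤ) : (1 : (Fin 7 → ℤ) ≃ₗ[ℤ] (Fin 7 → ℤ)) x = x := rfl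

lemma reflEquiv_mem (r : Fin 7 → ℤ) (hr : IsRoot r) : reflEquiv r hr ∈ WE6 :=
  Subgroup.subset_closure ⟨r, hr, rfl⟩

lemma dom_ind : ∀ n : ℕ, ∀ v : Fin 7 → ℤ, form v kvec = 0 → form v v = -78 →
    (∀ r ∈ rootL, form v r ≠ 0) → (78 + form v rho).toNat ≤ n →
    ∃ w ∈ WE6, ∀ i, form (w v) (Delta i) < 0 := by
  intro n
  induction n with
  | zero =>
    intro v h0 hn hreg hm
    by_cases hdom : ∀ i, form v (Delta i) < 0
    · exact ⟨1, one_mem _, fun i => by rw [oneW_apply]; exact hdom i⟩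
    · exfalso
      push_neg at hdom
      obtain ⟨i, hi⟩ := hdom
      have hne := hreg (Delta i) (Delta_mem_rootL i)
      have hipos : 0 < form v (Delta i) := lt_of_le_of_ne hi (Ne.symm hne)
      set v' := reflFun (Delta i) v with hv'
      have h0' : form v' kvec = 0 := by
        rw [hv', form_refl_left, h0, (Delta_root i).1, mul_zero, add_zero]
      have hn' : form v' v' = -78 := by rw [hv', form_refl_refl _ (Delta_root i), hn]
      have hdec : form v' rho = form v rho - form v (Delta i) := by
        rw [hv', form_refl_left, form_symm (Delta i) rho, rho_dom i]; ring
      have hcs := (CS78 h0' hn').1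
      omega
  | succ n ih =>
    intro v h0 hn hreg hm
    by_cases hdom : ∀ i, form v (Delta i) < 0
    · exact ⟨1, one_mem _, fun i => by rw [oneW_apply]; exact hdom i⟩
    · push_neg at hdom
      obtain ⟨i, hi⟩ := hdom
      have hne := hreg (Delta i) (Delta_mem_rootL i)
      have hipos : 0 < form v (Delta i) := lt_of_le_of_ne hi (Ne.symm hne)
      set v' := reflFun (Delta i) v with hv'
      have h0' : form v' kvec = 0 := by
        rw [hv', form_refl_left, h0, (Delta_root i).1, mul_zero, add_zero]
      have hn' : form v' v' = -78 := by rw [hv', form_refl_refl _ (Delta_root i), hn]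
      have hreg' : ∀ r ∈ rootL, form v' r ≠ 0 := by
        intro r hr
        rw [hv', form_refl_adj]
        exact hreg _ (root_mem (refl_root (Delta_root i) (rootL_root r hr)))
      have hdec : form v' rho = form v rho - form v (Delta i) := by
        rw [hv', form_refl_left, form_symm (Delta i) rho, rho_dom i]; ring
      have hcs := (CS78 h0' hn').1
      have hm' : (78 + form v' rho).toNat ≤ n := by omega
      obtain ⟨w, hwW, hwdom⟩ := ih v' h0' hn' hreg' hm'
      refine ⟨w * reflEquiv (Delta i) (Delta_root i),
        mul_mem hwW (reflEquiv_mem _ _), fun j => ?_⟩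
      rw [mulW_apply, reflEquiv_apply]
      exact hwdom j

/-! ### Positive roots and strictly dominant vectors -/

/-- `form x ·` as a linear map. -/
def formR (x : Fin 7 → ℤ) : (Fin 7 → ℤ) →ₗ[ℤ] ℤ where
  toFun := form x
  map_add' := form_add_right x
  map_smul' c y := form_smul_right c x y

lemma coeffs_neg (x : Fin 7 → ℤ) : coeffs (-x) = fun i => -(coeffs x i) := by
  funext i
  fin_cases i <;> simp [coeffs, cons_val_five] <;> ring

lemma neg_root {r : Fin 7 → ℤ} (hr : IsRoot r) : IsRoot (-r) := by
  constructor
  · have : (-r) = (-1 : ℤ) • r := by funext j; simp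
    rw [this, form_smul_left, hr.1, mul_zero]
  · have : (-r) = (-1 : ℤ) • r := by funext j; simp
    rw [this, form_smul_left, form_smul_right, hr.2]; ring

/-- A strictly dominant vector pairs negatively with every positive root. -/
lemma posroot_neg {u : Fin 7 → ℤ} (hu : ∀ i, form u (Delta i) < 0) :
    ∀ r ∈ posL, form u r < 0 := by
  intro r hr
  have hroot := rootL_root r (posL_sub r hr)
  have hexp : ∑ i, coeffs r i • Delta i = r := expand hroot.1
  have h1 : form u r = ∑ i, coeffs r i * form u (Delta i) := by
    conv_lhs => rw [← hexp]
    rw [show form u (∑ i, coeffs r i • Delta i) = formR u (∑ i, coeffs r i • Delta i) from rfl,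
      map_sum]
    refine Finset.sum_congr rfl fun i _ => ?_
    rw [map_smul]
    simp [formR]
  obtain ⟨i0, hi0⟩ := posL_ne_zero r hr
  have hb : ∀ i : Fin 6, coeffs r i * form u (Delta i) ≤ -(coeffs r i) := by
    intro i
    have h2 : form u (Delta i) ≤ -1 := by have := hu i; omega
    have := mul_le_mul_of_nonneg_left h2 (posL_coeffs r hr i)
    linarith
  have hsum : ∑ i, coeffs r i * form u (Delta i) ≤ ∑ i, -(coeffs r i) :=
    Finset.sum_le_sum fun i _ => hb i
  have hsum2 : ∑ i : Fin 6, -(coeffs r i) = -(∑ i, coeffs r i) := by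
    rw [Finset.sum_neg_distrib]
  have hsingle : coeffs r i0 ≤ ∑ i, coeffs r i :=
    Finset.single_le_sum (fun i _ => posL_coeffs r hr i) (Finset.mem_univ i0)
  rw [h1]
  linarith

/-- A root pairing negatively with a strictly dominant vector is positive. -/
lemma pos_of_dom {u : Fin 7 → ℤ} (hu : ∀ i, form u (Delta i) < 0)
    {r : Fin 7 → ℤ} (hr : IsRoot r) (hur : form u r < 0) : r ∈ posL := by
  have hmem := root_mem hr
  rcases rootL_signs' r hmem with hp | hn
  · exact rootL_signs r hmem hp
  · exfalso
    have hnegmem : (-r) ∈ posL := by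
      refine rootL_signs _ (root_mem (neg_root hr)) ?_
      intro i
      rw [coeffs_neg]
      simpa using hn i
    have := posroot_neg hu (-r) hnegmem
    have hformneg : form u (-r) = -form u r := by
      have h : (-r) = (-1 : ℤ) • r := by funext j; simp
      rw [h, form_smul_right]; ring
    omega

lemma rho_dom' : ∀ i, form rho (Delta i) < 0 := by
  intro i; rw [rho_dom i]; omega

/-! ### The longest element times `-1` as a product of four commuting reflections -/

def qa : Fin 7 → ℤ := ![-2,1,1,1,1,1,1]
def qb : Fin 7 → ℤ := ![0,-1,0,0,0,0,1]
def qc : Fin 7 → ℤ := ![0,0,-1,0,0,1,0]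
def qd : Fin 7 → ℤ := ![0,0,0,-1,1,0,0]

lemma qa_root : IsRoot qa := by decide
lemma qb_root : IsRoot qb := by decide
lemma qc_root : IsRoot qc := by decide
lemma qd_root : IsRoot qd := by decide

/-- The diagram involution. -/
def sig : Fin 6 → Fin 6 := ![4,3,2,1,0,5]

def w0 : (Fin 7 → ℤ) ≃ₗ[ℤ] (Fin 7 → ℤ) :=
  reflEquiv qa qa_root * (reflEquiv qb qb_root * (reflEquiv qc qc_root * reflEquiv qd qd_root))

lemma w0_mem : w0 ∈ WE6 :=
  mul_mem (reflEquiv_mem _ _)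
    (mul_mem (reflEquiv_mem _ _) (mul_mem (reflEquiv_mem _ _) (reflEquiv_mem _ _)))

lemma w0_action' : ∀ i, reflFun qa (reflFun qb (reflFun qc (reflFun qd (Delta i))))
    = -(Delta (sig i)) := by decide

lemma w0_action : ∀ i, w0 (Delta i) = -(Delta (sig i)) :=
  w0_action'

/-! ### Diagram automorphism classification -/

set_option synthInstance.maxSize 2000 in
set_option synthInstance.maxHeartbeats 1000000 in
set_option maxHeartbeats 1000000 in
lemma diagAut : ∀ p0 p1 : Fin 6, cartan p0 p1 = 1 →
    ∀ p2, cartan p1 p2 = 1 → cartan p0 p2 = 0 →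
    ∀ p3, cartan p2 p3 = 1 → cartan p0 p3 = 0 → cartan p1 p3 = 0 →
    ∀ p4, cartan p3 p4 = 1 → cartan p0 p4 = 0 → cartan p1 p4 = 0 → cartan p2 p4 = 0 →
    ∀ p5, cartan p2 p5 = 1 → cartan p0 p5 = 0 → cartan p1 p5 = 0 → cartan p3 p5 = 0 →
      cartan p4 p5 = 0 →
    (p0 = 0 ∧ p1 = 1 ∧ p2 = 2 ∧ p3 = 3 ∧ p4 = 4 ∧ p5 = 5) ∨
    (p0 = 4 ∧ p1 = 3 ∧ p2 = 2 ∧ p3 = 1 ∧ p4 = 0 ∧ p5 = 5) := by decide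

/-! ### Simple roots as elements of the lattice, and extension from the basis -/

def DeltaE (i : Fin 6) : E6L := ⟨Delta i, (Delta_root i).1⟩

lemma ext_E6L (g : E6L ≃ₗ[ℤ] E6L) (F : (Fin 7 → ℤ) →ₗ[ℤ] (Fin 7 → ℤ))
    (hF : ∀ i, ((g (DeltaE i) : E6L) : Fin 7 → ℤ) = F (Delta i)) :
    ∀ x : E6L, ((g x : E6L) : Fin 7 → ℤ) = F (x : Fin 7 → ℤ) := by
  intro x
  have hx : form (x : Fin 7 → ℤ) kvec = 0 := x.2
  have hexp : x = ∑ i, coeffs (x : Fin 7 → ℤ) i • DeltaE i := by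
    apply Subtype.ext
    rw [Submodule.coe_sum]
    simp only [SetLike.val_smul]
    exact (expand hx).symm
  calc ((g x : E6L) : Fin 7 → ℤ)
      = ((g (∑ i, coeffs (x : Fin 7 → ℤ) i • DeltaE i) : E6L) : Fin 7 → ℤ) := by rw [← hexp]
    _ = ∑ i, coeffs (x : Fin 7 → ℤ) i • ((g (DeltaE i) : E6L) : Fin 7 → ℤ) := by
        rw [map_sum, Submodule.coe_sum]
        refine Finset.sum_congr rfl fun i _ => ?_
        rw [map_smul]
        rfl
    _ = ∑ i, coeffs (x : Fin 7 → ℤ) i • F (Delta i) := by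
        refine Finset.sum_congr rfl fun i _ => ?_
        rw [hF i]
    _ = F (∑ i, coeffs (x : Fin 7 → ℤ) i • Delta i) := by
        rw [map_sum]
        refine (Finset.sum_congr rfl fun i _ => ?_)
        rw [map_smul]
    _ = F (x : Fin 7 → ℤ) := by rw [expand hx]

lemma hT_eq_aux {π : Fin 6 → Fin 6} (e0 : π 0 = 0) (e1 : π 1 = 1) (e2 : π 2 = 2)
    (e3 : π 3 = 3) (e4 : π 4 = 4) (e5 : π 5 = 5) : ∀ i, π i = i := by
  intro i; fin_cases i <;> assumption

lemma hT_eq_aux2 {π : Fin 6 → Fin 6} (e0 : π 0 = 4) (e1 : π 1 = 3) (e2 : π 2 = 2)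
    (e3 : π 3 = 1) (e4 : π 4 = 0) (e5 : π 5 = 5) : ∀ i, π i = sig i := by
  intro i; fin_cases i <;> first
    | exact e0.trans (by decide) | exact e1.trans (by decide) | exact e2.trans (by decide)
    | exact e3.trans (by decide) | exact e4.trans (by decide) | exact e5.trans (by decide)

theorem stmt_19' :
    (∀ g : E6L ≃ₗ[ℤ] E6L,
      (∀ x y : E6L, form ((g x : Fin 7 → ℤ)) ((g y : Fin 7 → ℤ)) =
        form (x : Fin 7 → ℤ) (y : Fin 7 → ℤ)) →
      (∃ w ∈ WE6, ∀ x : E6L, ((g x : E6L) : Fin 7 → ℤ) = w (x : Fin 7 → ℤ)) ∨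
      (∃ w ∈ WE6, ∀ x : E6L, ((g x : E6L) : Fin 7 → ℤ) = -(w (x : Fin 7 → ℤ)))) ∧
    (∀ w ∈ WE6, ¬ (∀ x : Fin 7 → ℤ, form x kvec = 0 → w x = -x)) := by
  constructor
  · intro g hg
    have hg' : ∀ x y : E6L, form ((g.symm x : E6L) : Fin 7 → ℤ) ((g.symm y : E6L) : Fin 7 → ℤ)
        = form (x : Fin 7 → ℤ) (y : Fin 7 → ℤ) := by
      intro x y
      have h := hg (g.symm x) (g.symm y)
      rw [g.apply_symm_apply, g.apply_symm_apply] at h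
      exact h.symm
    set rhoE : E6L := ⟨rho, rho_E6L⟩ with hrhoE
    set v : Fin 7 → ℤ := ((g rhoE : E6L) : Fin 7 → ℤ) with hvdef
    have hv0 : form v kvec = 0 := (g rhoE).2
    have hvn : form v v = -78 := by
      rw [hvdef, hg rhoE rhoE]
      exact rho_norm
    have groot : ∀ (x : E6L), IsRoot (x : Fin 7 → ℤ) → IsRoot ((g x : E6L) : Fin 7 → ℤ) :=
      fun x hx => ⟨(g x).2, by rw [hg x x]; exact hx.2⟩
    have gsroot : ∀ (x : E6L), IsRoot (x : Fin 7 → ℤ) →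
        IsRoot ((g.symm x : E6L) : Fin 7 → ℤ) :=
      fun x hx => ⟨(g.symm x).2, by rw [hg' x x]; exact hx.2⟩
    have hvreg : ∀ r ∈ rootL, form v r ≠ 0 := by
      intro r hr
      have hrr := rootL_root r hr
      have h3 := hg rhoE (g.symm ⟨r, hrr.1⟩)
      rw [g.apply_symm_apply] at h3
      rw [hvdef]
      rw [show r = ((⟨r, hrr.1⟩ : E6L) : Fin 7 → ℤ) from rfl, h3]
      exact rho_reg _ (root_mem (gsroot ⟨r, hrr.1⟩ hrr))
    have hcs := CS78 hv0 hvn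
    obtain ⟨w, hwW, hwdom⟩ := dom_ind 156 v hv0 hvn hvreg (by omega)
    set T : Fin 6 → (Fin 7 → ℤ) := fun i => w ((g (DeltaE i) : E6L) : Fin 7 → ℤ) with hTdef
    have hTroot : ∀ i, IsRoot (T i) := fun i => W_root hwW (groot (DeltaE i) (Delta_root i))
    have hTpair : ∀ i j, form (T i) (T j) = cartan i j := by
      intro i j
      rw [hTdef]
      simp only []
      rw [W_form hwW, hg (DeltaE i) (DeltaE j)]
      exact cartan_eq i j
    have huT : ∀ i, form (w v) (T i) = -1 := by
      intro i
      rw [hTdef]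
      simp only []
      rw [W_form hwW, hvdef, hg rhoE (DeltaE i)]
      exact rho_dom i
    have hTpos : ∀ i, T i ∈ posL := by
      intro i
      refine pos_of_dom hwdom (hTroot i) ?_
      rw [huT i]; omega
    have hpull : ∀ a ∈ posL, ∃ aE : E6L,
        ((g aE : E6L) : Fin 7 → ℤ) = w⁻¹ a ∧ (aE : Fin 7 → ℤ) ∈ posL := by
      intro a ha
      have haroot := rootL_root a (posL_sub a ha)
      have hwaroot : IsRoot (w⁻¹ a) := W_root (inv_mem hwW) haroot
      refine ⟨g.symm ⟨w⁻¹ a, hwaroot.1⟩, ?_, ?_⟩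
      · rw [g.apply_symm_apply]
      · have haEroot : IsRoot ((g.symm ⟨w⁻¹ a, hwaroot.1⟩ : E6L) : Fin 7 → ℤ) :=
          gsroot _ hwaroot
        refine pos_of_dom rho_dom' haEroot ?_
        have h5 := hg rhoE (g.symm ⟨w⁻¹ a, hwaroot.1⟩)
        rw [g.apply_symm_apply] at h5
        have h7 := W_form hwW v (w⁻¹ a)
        rw [show w (w⁻¹ a) = a from w.apply_symm_apply a] at h7
        have h8 : form rho ((g.symm ⟨w⁻¹ a, hwaroot.1⟩ : E6L) : Fin 7 → ℤ)
            = form (w v) a := by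
          rw [← h5, ← h7]
        rw [h8]
        exact posroot_neg hwdom a ha
    have hTindec : ∀ i, ¬ ∃ a ∈ posL, ∃ b ∈ posL, a + b = T i := by
      rintro i ⟨a, ha, b, hb, hab⟩
      obtain ⟨aE, hgaE, haP⟩ := hpull a ha
      obtain ⟨bE, hgbE, hbP⟩ := hpull b hb
      have h9 : ((g (aE + bE) : E6L) : Fin 7 → ℤ) = ((g (DeltaE i) : E6L) : Fin 7 → ℤ) := by
        rw [map_add, Submodule.coe_add, hgaE, hgbE, ← map_add w⁻¹ a b, hab, hTdef]
        exact w.symm_apply_apply _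
      have h11 : aE + bE = DeltaE i := g.injective (Subtype.coe_injective h9)
      have h12 : (aE : Fin 7 → ℤ) + (bE : Fin 7 → ℤ) = Delta i := by
        rw [← Submodule.coe_add, h11]; rfl
      exact indec i _ haP _ hbP h12
    have hchoice : ∀ i, ∃ j, Delta j = T i := fun i =>
      (dec_or (T i) (hTpos i)).resolve_right (hTindec i)
    choose π hπ using hchoice
    have hππ : ∀ i j, cartan (π i) (π j) = cartan i j := by
      intro i j
      rw [← cartan_eq, hπ i, hπ j]
      exact hTpair i j
    have hclass := diagAut (π 0) (π 1) ((hππ 0 1).trans (by decide))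
      (π 2) ((hππ 1 2).trans (by decide)) ((hππ 0 2).trans (by decide))
      (π 3) ((hππ 2 3).trans (by decide)) ((hππ 0 3).trans (by decide))
        ((hππ 1 3).trans (by decide))
      (π 4) ((hππ 3 4).trans (by decide)) ((hππ 0 4).trans (by decide))
        ((hππ 1 4).trans (by decide)) ((hππ 2 4).trans (by decide))
      (π 5) ((hππ 2 5).trans (by decide)) ((hππ 0 5).trans (by decide))
        ((hππ 1 5).trans (by decide)) ((hππ 3 5).trans (by decide))
        ((hππ 4 5).trans (by decide))
    rcases hclass with ⟨e0, e1, e2, e3, e4, e5⟩ | ⟨e0, e1, e2, e3, e4, e5⟩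
    · left
      refine ⟨w⁻¹, inv_mem hwW, ?_⟩
      have hid := hT_eq_aux e0 e1 e2 e3 e4 e5
      have hF : ∀ i, ((g (DeltaE i) : E6L) : Fin 7 → ℤ)
          = (w⁻¹ : (Fin 7 → ℤ) ≃ₗ[ℤ] (Fin 7 → ℤ)).toLinearMap (Delta i) := by
        intro i
        have h12 : T i = Delta i := by rw [← hπ i, hid i]
        have h13 : w⁻¹ (T i) = ((g (DeltaE i) : E6L) : Fin 7 → ℤ) := by
          rw [hTdef]
          exact w.symm_apply_apply _
        rw [← h13, h12]
        rfl
      intro x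
      exact ext_E6L g _ hF x
    · right
      refine ⟨w⁻¹ * w0, mul_mem (inv_mem hwW) w0_mem, ?_⟩
      have hsg := hT_eq_aux2 e0 e1 e2 e3 e4 e5
      have hF : ∀ i, ((g (DeltaE i) : E6L) : Fin 7 → ℤ)
          = (-(((w⁻¹ * w0) : (Fin 7 → ℤ) ≃ₗ[ℤ] (Fin 7 → ℤ)).toLinearMap)) (Delta i) := by
        intro i
        have h12 : T i = Delta (sig i) := by rw [← hπ i, hsg i]
        have h13 : w⁻¹ (T i) = ((g (DeltaE i) : E6L) : Fin 7 → ℤ) := by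
          rw [hTdef]
          exact w.symm_apply_apply _
        have h14 : (-(((w⁻¹ * w0) : (Fin 7 → ℤ) ≃ₗ[ℤ] (Fin 7 → ℤ)).toLinearMap)) (Delta i)
            = -(w⁻¹ (w0 (Delta i))) := by
          rw [LinearMap.neg_apply]
          rfl
        rw [h14, w0_action i, map_neg, neg_neg, ← h13, h12]
      intro x
      have h15 := ext_E6L g _ hF x
      rw [h15, LinearMap.neg_apply]
      rfl
  · intro w hw hcontra
    have hk := W_kvec hw
    have hmem : form ((3:ℤ) • fvec 1 + kvec) kvec = 0 := by decide
    have h := hcontra _ hmem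
    rw [map_add, map_smul, hk] at h
    have h1 := congrFun h 1
    simp only [Pi.add_apply, Pi.smul_apply, Pi.neg_apply, smul_eq_mul] at h1
    have hk1 : kvec 1 = 1 := rfl
    have hf1 : fvec 1 1 = 1 := rfl
    rw [hk1, hf1] at h1
    omega

/-- The isometry group of the `E₆` lattice is `W(E₆) × {±1}`: every `ℤ`-linear
automorphism of `E₆ = k^⊥` preserving the bilinear form is the restriction of some
`w ∈ W(E₆)` or of `-w` for some `w ∈ W(E₆)`, and `-id` is not the restriction of any
element of `W(E₆)`. -/
theorem stmt_19 :
    (∀ g : E6L ≃ₗ[ℤ] E6L,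
      (∀ x y : E6L, form ((g x : Fin 7 → ℤ)) ((g y : Fin 7 → ℤ)) =
        form (x : Fin 7 → ℤ) (y : Fin 7 → ℤ)) →
      (∃ w ∈ WE6, ∀ x : E6L, ((g x : E6L) : Fin 7 → ℤ) = w (x : Fin 7 → ℤ)) ∨
      (∃ w ∈ WE6, ∀ x : E6L, ((g x : E6L) : Fin 7 → ℤ) = -(w (x : Fin 7 → ℤ)))) ∧
    (∀ w ∈ WE6, ¬ (∀ x : Fin 7 → ℤ, form x kvec = 0 → w x = -x)) :=
  stmt_19'
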